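/- Fix β ∈ (0, 1/4) and define for index pairs (j,k) with 1 ≤ j ≤ k ≤ 4: β_{1,1} = β_{4,4} = β²/2, β_{2,2} = β_{3,3} = (1/2−β)²/2, β_{1,4} = β², β_{2,3} = (1/2−β)², and β_{1,2} = β_{1,3} = β_{2,4} = β_{3,4} = β(1/2−β). For c > 0 and a vector η = (η_{j,k})_{1≤j≤k≤4} with η_{j,k} > −β_{j,k}·√c for all (j,k), define I₃(β,η) = Σ_{1≤j≤k≤4} (β_{j,k} + η_{j,k}·c^{−1/2})·log(1 + η_{j,k}·β_{j,k}^{−1}·c^{−1/2}). Then for every a > 0 there exists c₀ = c₀(β,a) > 0 such that for all c > c₀ and all such η satisfying Σ_{1≤j≤k≤4} η_{j,k} = 0 and ‖η‖₂ ≥ a, one has I₃(β,η) ≥ a²/(4c). -/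

import Mathlib

/-- The coefficients `β_{j,k}` for `1 ≤ j ≤ k ≤ 4` (indices shifted to `Fin 4`):
`β_{1,1} = β_{4,4} = β²/2`, `β_{2,2} = β_{3,3} = (1/2−β)²/2`, `β_{1,4} = β²`,
`β_{2,3} = (1/2−β)²`, and `β_{1,2} = β_{1,3} = β_{2,4} = β_{3,4} = β(1/2−β)`. -/
noncomputable def betaCoef (β : ℝ) (j k : Fin 4) : ℝ :=
  if j = k then (if j = 0 ∨ j = 3 then β ^ 2 / 2 else (1/2 - β) ^ 2 / 2)
  else if j = 0 ∧ k = 3 then β ^ 2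
  else if j = 1 ∧ k = 2 then (1/2 - β) ^ 2
  else β * (1/2 - β)

/-- The index set of pairs `(j,k)` with `j ≤ k` in `Fin 4`. -/
def pairIdx : Finset (Fin 4 × Fin 4) := Finset.univ.filter fun p => p.1 ≤ p.2

/-- `I₃(β,η) = Σ_{1≤j≤k≤4} (β_{j,k} + η_{j,k}·c^{−1/2})·log(1 + η_{j,k}·β_{j,k}^{−1}·c^{−1/2})`. -/
noncomputable def I₃ (c β : ℝ) (η : Fin 4 × Fin 4 → ℝ) : ℝ :=
  ∑ p ∈ pairIdx,
    (betaCoef β p.1 p.2 + η p * c ^ (-(1:ℝ)/2)) *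
      Real.log (1 + η p * (betaCoef β p.1 p.2)⁻¹ * c ^ (-(1:ℝ)/2))

lemma aux_log_lb {x : ℝ} (hx : -1 < x) : x / (1+x) ≤ Real.log (1+x) := by
  have h0 : 0 < 1 + x := by linarith
  have h := Real.log_le_sub_one_of_pos (inv_pos.mpr h0)
  rw [Real.log_inv] at h
  have heq : x/(1+x) = 1 - (1+x)⁻¹ := by field_simp; ring
  rw [heq]; linarith

lemma f_nonneg {x : ℝ} (hx : -1 < x) : 0 ≤ (1+x) * Real.log (1+x) - x := by
  have h0 : 0 < 1+x := by linarith
  have h := mul_le_mul_of_nonneg_left (aux_log_lb hx) h0.le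
  have hxx : (1+x) * (x/(1+x)) = x := by field_simp
  rw [hxx] at h; linarith

lemma hasDerivAt_F (x : ℝ) (hx : (1:ℝ)+x ≠ 0) :
    HasDerivAt (fun y => (1+y)*Real.log (1+y) - y - y^2/4) (Real.log (1+x) - x/2) x := by
  have h1 : HasDerivAt (fun y : ℝ => 1 + y) 1 x := by
    simpa using (hasDerivAt_id x).const_add (1:ℝ)
  have h2 : HasDerivAt (fun y : ℝ => Real.log (1+y)) ((1+x)⁻¹ * 1) x :=
    (Real.hasDerivAt_log hx).comp x h1
  have h3 := h1.mul h2
  have h4 := (h3.sub (hasDerivAt_id x)).sub ((hasDerivAt_pow 2 x).div_const 4)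
  refine h4.congr_deriv ?_
  field_simp
  ring

lemma hasDerivAt_G (x : ℝ) (hx : (1:ℝ)+x ≠ 0) :
    HasDerivAt (fun y => (1+y)*Real.log (1+y) - y) (Real.log (1+x)) x := by
  have h1 : HasDerivAt (fun y : ℝ => 1 + y) 1 x := by
    simpa using (hasDerivAt_id x).const_add (1:ℝ)
  have h2 : HasDerivAt (fun y : ℝ => Real.log (1+y)) ((1+x)⁻¹ * 1) x :=
    (Real.hasDerivAt_log hx).comp x h1
  have h3 := (h1.mul h2).sub (hasDerivAt_id x)
  refine h3.congr_deriv ?_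
  field_simp
  ring

lemma f_quad {x : ℝ} (hx : -1 < x) (hx1 : x ≤ 1) : x^2/4 ≤ (1+x)*Real.log (1+x) - x := by
  rcases le_or_gt x 0 with h0 | h0
  · have key : AntitoneOn (fun y => (1+y)*Real.log (1+y) - y - y^2/4) (Set.Icc x 0) := by
      apply antitoneOn_of_deriv_nonpos (convex_Icc x 0)
      · intro y hy
        exact (hasDerivAt_F y (by rcases hy with ⟨h1, h2⟩; nlinarith)).continuousAt.continuousWithinAt
      · intro y hy
        rw [interior_Icc] at hy
        exact (hasDerivAt_F y (by nlinarith [hy.1, hy.2])).differentiableAt.differentiableWithinAt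
      · intro y hy
        rw [interior_Icc] at hy
        rw [(hasDerivAt_F y (by nlinarith [hy.1, hy.2])).deriv]
        have h1 : 0 < 1 + y := by nlinarith [hy.1]
        have h2 := Real.log_le_sub_one_of_pos h1
        nlinarith [hy.2]
    have h := key ⟨le_rfl, h0⟩ ⟨h0, le_rfl⟩ h0
    simp only [Real.log_one] at h
    norm_num at h
    nlinarith [h]
  · have key : MonotoneOn (fun y => (1+y)*Real.log (1+y) - y - y^2/4) (Set.Icc 0 x) := by
      apply monotoneOn_of_deriv_nonneg (convex_Icc 0 x)
      · intro y hy
        exact (hasDerivAt_F y (by rcases hy with ⟨h1, h2⟩; nlinarith)).continuousAt.continuousWithinAt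
      · intro y hy
        rw [interior_Icc] at hy
        exact (hasDerivAt_F y (by nlinarith [hy.1, hy.2])).differentiableAt.differentiableWithinAt
      · intro y hy
        rw [interior_Icc] at hy
        rw [(hasDerivAt_F y (by nlinarith [hy.1])).deriv]
        have hy0 : 0 < y := hy.1
        have hy1 : y < 1 := lt_of_lt_of_le hy.2 hx1
        have h1 := aux_log_lb (show -1 < y by linarith)
        have h2 : y/2 ≤ y/(1+y) := by
          rw [div_le_div_iff₀ (by norm_num) (by linarith)]
          nlinarith
        linarith
    have h := key ⟨le_rfl, h0.le⟩ ⟨h0.le, le_rfl⟩ h0.le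
    simp only [Real.log_one] at h
    norm_num at h
    nlinarith [h]

lemma f_big {x : ℝ} (hx : 1 < x) : 2*Real.log 2 - 1 ≤ (1+x)*Real.log (1+x) - x := by
  have key : MonotoneOn (fun y => (1+y)*Real.log (1+y) - y) (Set.Icc 1 x) := by
    apply monotoneOn_of_deriv_nonneg (convex_Icc 1 x)
    · intro y hy
      exact (hasDerivAt_G y (by rcases hy with ⟨h1, h2⟩; nlinarith)).continuousAt.continuousWithinAt
    · intro y hy
      rw [interior_Icc] at hy
      exact (hasDerivAt_G y (by nlinarith [hy.1])).differentiableAt.differentiableWithinAt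
    · intro y hy
      rw [interior_Icc] at hy
      rw [(hasDerivAt_G y (by nlinarith [hy.1])).deriv]
      exact Real.log_nonneg (by linarith [hy.1])
  have h := key ⟨le_rfl, hx.le⟩ ⟨hx.le, le_rfl⟩ hx.le
  calc 2*Real.log 2 - 1 = ((1:ℝ)+1)*Real.log (1+1) - 1 := by norm_num
    _ ≤ (1+x)*Real.log (1+x) - x := h

lemma betaCoef_bounds {β : ℝ} (hβ0 : 0 < β) (hβ1 : β < 1/4) (j k : Fin 4) :
    β^2/2 ≤ betaCoef β j k ∧ betaCoef β j k ≤ 1/4 := by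
  unfold betaCoef
  split_ifs <;> constructor <;> nlinarith

set_option maxHeartbeats 1000000 in
theorem stmt18 (β : ℝ) (hβ : β ∈ Set.Ioo (0 : ℝ) (1/4)) (a : ℝ) (ha : 0 < a) :
    ∃ c₀ > (0:ℝ), ∀ c > c₀, ∀ η : Fin 4 × Fin 4 → ℝ,
      (∀ p ∈ pairIdx, -(betaCoef β p.1 p.2) * Real.sqrt c < η p) →
      (∑ p ∈ pairIdx, η p = 0) →
      a ≤ Real.sqrt (∑ p ∈ pairIdx, (η p) ^ 2) →
      a ^ 2 / (4 * c) ≤ I₃ c β η := by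
  obtain ⟨hβ0, hβ1⟩ := hβ
  have hlog2 : (0.693:ℝ) < Real.log 2 := by
    have := Real.log_two_gt_d9; linarith
  have hLpos : (0:ℝ) < 2 * Real.log 2 - 1 := by linarith
  have hMpos : (0:ℝ) < β^2/2 * (2 * Real.log 2 - 1) := by positivity
  refine ⟨max 1 (a^2 / (β^2/2 * (2 * Real.log 2 - 1))),
    lt_of_lt_of_le one_pos (le_max_left _ _), ?_⟩
  intro c hc η hlow hsum hnorm
  have hc1 : (1:ℝ) < c := lt_of_le_of_lt (le_max_left _ _) hc
  have hc0 : (0:ℝ) < c := by linarith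
  set t : ℝ := c ^ (-(1:ℝ)/2) with htdef
  have ht : 0 < t := Real.rpow_pos_of_pos hc0 _
  have htt : t * t = c⁻¹ := by
    rw [htdef, ← Real.rpow_add hc0]; norm_num [Real.rpow_neg_one]
  have hst : Real.sqrt c * t = 1 := by
    rw [htdef, Real.sqrt_eq_rpow, ← Real.rpow_add hc0]; norm_num
  have hBpos : ∀ p : Fin 4 × Fin 4, 0 < betaCoef β p.1 p.2 := fun p => by
    nlinarith [(betaCoef_bounds hβ0 hβ1 p.1 p.2).1]
  have hBle : ∀ p : Fin 4 × Fin 4, betaCoef β p.1 p.2 ≤ 1/4 := fun p =>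
    (betaCoef_bounds hβ0 hβ1 p.1 p.2).2
  have hBge : ∀ p : Fin 4 × Fin 4, β^2/2 ≤ betaCoef β p.1 p.2 := fun p =>
    (betaCoef_bounds hβ0 hβ1 p.1 p.2).1
  have hxgt : ∀ p ∈ pairIdx, -1 < η p * (betaCoef β p.1 p.2)⁻¹ * t := by
    intro p hp
    have hB := hBpos p
    have h1 : 0 < (η p + betaCoef β p.1 p.2 * Real.sqrt c) * ((betaCoef β p.1 p.2)⁻¹ * t) := by
      apply mul_pos
      · have := hlow p hp; linarith
      · positivity
    have hBB : betaCoef β p.1 p.2 * (betaCoef β p.1 p.2)⁻¹ = 1 := mul_inv_cancel₀ hB.ne'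
    have expand : (η p + betaCoef β p.1 p.2 * Real.sqrt c) * ((betaCoef β p.1 p.2)⁻¹ * t)
        = η p * (betaCoef β p.1 p.2)⁻¹ * t + 1 := by
      linear_combination (Real.sqrt c * t) * hBB + hst
    rw [expand] at h1
    linarith
  have hsplit : I₃ c β η = ∑ p ∈ pairIdx, betaCoef β p.1 p.2 *
      ((1 + η p * (betaCoef β p.1 p.2)⁻¹ * t) *
        Real.log (1 + η p * (betaCoef β p.1 p.2)⁻¹ * t) - η p * (betaCoef β p.1 p.2)⁻¹ * t) := by
    unfold I₃
    rw [← htdef]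
    have hcong : ∀ p ∈ pairIdx,
        (betaCoef β p.1 p.2 + η p * t) * Real.log (1 + η p * (betaCoef β p.1 p.2)⁻¹ * t)
        = betaCoef β p.1 p.2 * ((1 + η p * (betaCoef β p.1 p.2)⁻¹ * t) *
            Real.log (1 + η p * (betaCoef β p.1 p.2)⁻¹ * t) - η p * (betaCoef β p.1 p.2)⁻¹ * t)
          + η p * t := by
      intro p hp
      have hBB : betaCoef β p.1 p.2 * (η p * (betaCoef β p.1 p.2)⁻¹ * t) = η p * t := by
        field_simp
        exact mul_div_cancel_left₀ _ (hBpos p).ne'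
      linear_combination (1 - Real.log (1 + η p * (betaCoef β p.1 p.2)⁻¹ * t)) * hBB
    rw [Finset.sum_congr rfl hcong, Finset.sum_add_distrib, ← Finset.sum_mul, hsum,
      zero_mul, add_zero]
  rw [hsplit]
  by_cases hall : ∀ p ∈ pairIdx, η p * (betaCoef β p.1 p.2)⁻¹ * t ≤ 1
  · have hterm : ∀ p ∈ pairIdx, η p ^ 2 * (t * t) ≤ betaCoef β p.1 p.2 *
        ((1 + η p * (betaCoef β p.1 p.2)⁻¹ * t) *
          Real.log (1 + η p * (betaCoef β p.1 p.2)⁻¹ * t) - η p * (betaCoef β p.1 p.2)⁻¹ * t) := by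
      intro p hp
      have hB := hBpos p
      have hx := hxgt p hp
      have hquad := f_quad hx (hall p hp)
      have h4 : (4:ℝ) ≤ (betaCoef β p.1 p.2)⁻¹ := by
        nlinarith [mul_inv_cancel₀ hB.ne', inv_pos.mpr hB, hBle p]
      have heq : betaCoef β p.1 p.2 * ((η p * (betaCoef β p.1 p.2)⁻¹ * t)^2 / 4)
          = η p ^2 * (betaCoef β p.1 p.2)⁻¹ * (t*t) / 4 := by
        field_simp
      have h5 : η p ^2 * (t*t) ≤ betaCoef β p.1 p.2 * ((η p * (betaCoef β p.1 p.2)⁻¹ * t)^2/4) := by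
        rw [heq]
        nlinarith [mul_nonneg (sq_nonneg (η p)) (mul_pos ht ht).le, h4]
      nlinarith [mul_le_mul_of_nonneg_left hquad hB.le]
    have hsum2 : a^2 ≤ ∑ p ∈ pairIdx, η p ^ 2 := by
      have hnn : 0 ≤ ∑ p ∈ pairIdx, η p ^ 2 := Finset.sum_nonneg fun p _ => sq_nonneg _
      nlinarith [Real.sq_sqrt hnn, Real.sqrt_nonneg (∑ p ∈ pairIdx, η p ^ 2), hnorm]
    calc a^2/(4*c) ≤ a^2 * (t*t) := by
          rw [htt]
          rw [show a^2 * c⁻¹ = a^2 / c from by ring, div_le_div_iff₀ (by linarith) hc0]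
          nlinarith [sq_nonneg a]
      _ ≤ (∑ p ∈ pairIdx, η p ^ 2) * (t*t) :=
          mul_le_mul_of_nonneg_right hsum2 (by positivity)
      _ = ∑ p ∈ pairIdx, η p ^ 2 * (t*t) := Finset.sum_mul ..
      _ ≤ _ := Finset.sum_le_sum hterm
  · push_neg at hall
    obtain ⟨q, hqmem, hq1⟩ := hall
    have hnn : ∀ p ∈ pairIdx, 0 ≤ betaCoef β p.1 p.2 *
        ((1 + η p * (betaCoef β p.1 p.2)⁻¹ * t) *
          Real.log (1 + η p * (betaCoef β p.1 p.2)⁻¹ * t) - η p * (betaCoef β p.1 p.2)⁻¹ * t) :=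
      fun p hp => mul_nonneg (hBpos p).le (f_nonneg (hxgt p hp))
    have hsingle := Finset.single_le_sum hnn hqmem
    have hfb := f_big hq1
    have h7 : β^2/2 * (2 * Real.log 2 - 1) ≤ betaCoef β q.1 q.2 *
        ((1 + η q * (betaCoef β q.1 q.2)⁻¹ * t) *
          Real.log (1 + η q * (betaCoef β q.1 q.2)⁻¹ * t) - η q * (betaCoef β q.1 q.2)⁻¹ * t) :=
      mul_le_mul (hBge q) hfb hLpos.le (hBpos q).le
    have h8 : a^2/(4*c) ≤ β^2/2 * (2 * Real.log 2 - 1) := by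
      have hcM : a^2/(β^2/2*(2 * Real.log 2 - 1)) < c := lt_of_le_of_lt (le_max_right _ _) hc
      rw [div_lt_iff₀ hMpos] at hcM
      rw [div_le_iff₀ (by positivity)]
      nlinarith
    linarith
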